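/- Let p(λ) be a monic degree-n polynomial with positive real roots λ₁,...,λₙ and mean root λ̄ = a₁/n. If for some index m with 2 ≤ m ≤ n equality aₘ = C(n,m)·λ̄^m holds (where aₘ is the m-th elementary symmetric function of the roots), then all roots are equal, i.e. λᵢ = λ̄ for all i. -/

import Mathlib

open Finset Polynomial

/-- The `m`-th elementary symmetric function of `n` real numbers. -/
noncomputable def esymmFun {R : Type*} [CommSemiring R] (n : ℕ) (lam : Fin n → R) (m : ℕ) : R :=
  ∑ t ∈ Finset.univ.powersetCard m, ∏ i ∈ t, lam i

lemma esymm_zero (n : ℕ) (lam : Fin n → ℝ) : esymmFun n lam 0 = 1 := by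
  simp [esymmFun]

lemma esymm_gt (n m : ℕ) (h : n < m) (lam : Fin n → ℝ) : esymmFun n lam m = 0 := by
  rw [esymmFun, Finset.powersetCard_eq_empty.2 (by simpa using h), Finset.sum_empty]

lemma esymm_coeff (n m : ℕ) (h : m ≤ n) (lam : Fin n → ℝ) :
    esymmFun n lam m = (∏ i, (X + C (lam i))).coeff (n - m) := by
  rw [Finset.prod_X_add_C_coeff _ _ (by simpa using Nat.sub_le n m)]
  simp [esymmFun, Nat.sub_sub_self h]

lemma esymm_rec (n m : ℕ) (hm : 1 ≤ m) (hmn : m ≤ n + 1) (lam : Fin (n+1) → ℝ) :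
    esymmFun (n+1) lam m = esymmFun n (lam ∘ Fin.castSucc) m
      + lam (Fin.last n) * esymmFun n (lam ∘ Fin.castSucc) (m-1) := by
  have hprod : (∏ i, (X + C (lam i))) =
      (∏ i : Fin n, (X + C (lam (Fin.castSucc i)))) * (X + C (lam (Fin.last n))) :=
    Fin.prod_univ_castSucc _
  set P : Polynomial ℝ := ∏ i : Fin n, (X + C (lam (Fin.castSucc i))) with hP
  rw [esymm_coeff _ _ hmn, hprod]
  have hco : (P * (X + C (lam (Fin.last n)))).coeff (n + 1 - m)
      = (if n + 1 - m = 0 then 0 else P.coeff (n + 1 - m - 1)) + lam (Fin.last n) * P.coeff (n + 1 - m) := by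
    rw [mul_add, mul_comm P X]
    rcases Nat.eq_zero_or_pos (n + 1 - m) with h0 | h0
    · simp [h0, mul_comm]
    · obtain ⟨k, hk⟩ : ∃ k, n + 1 - m = k + 1 := ⟨n - m, by omega⟩
      rw [hk]
      simp [coeff_X_mul, mul_comm]
  rw [hco]
  rcases Nat.lt_or_ge m (n+1) with hlt | hge
  · have hmn' : m ≤ n := by omega
    rw [if_neg (by omega)]
    rw [esymm_coeff n m hmn', esymm_coeff n (m-1) (by omega)]
    have e1 : n + 1 - m - 1 = n - m := by omega
    have e2 : n - (m - 1) = n + 1 - m := by omega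
    rw [e1, e2]
    rfl
  · have hm' : m = n + 1 := by omega
    subst hm'
    rw [if_pos (by omega)]
    have e3 : n + 1 - 1 = n := by omega
    rw [e3, esymm_gt n (n+1) (by omega), esymm_coeff n n le_rfl]
    simp; left; rfl

lemma tangent_lt (m : ℕ) (hm : 2 ≤ m) {μ a : ℝ} (hμ : 0 < μ) (ha : 0 ≤ a) (hne : a ≠ μ) :
    μ ^ m + m * μ ^ (m-1) * (a - μ) < a ^ m := by
  obtain ⟨k, rfl⟩ : ∃ k, m = k + 2 := ⟨m - 2, by omega⟩
  have hgeom : (∑ i ∈ Finset.range (k+2), a ^ i * μ ^ (k + 2 - 1 - i)) * (a - μ)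
      = a ^ (k+2) - μ ^ (k+2) := geom_sum₂_mul a μ (k+2)
  have key : ((k:ℝ) + 2) * μ ^ (k+1) * (a - μ)
      < (∑ i ∈ Finset.range (k+2), a ^ i * μ ^ (k + 2 - 1 - i)) * (a - μ) := by
    rcases lt_or_gt_of_ne hne with hlt | hgt
    · have hsum : (∑ i ∈ Finset.range (k+2), a ^ i * μ ^ (k + 2 - 1 - i))
          < ∑ _i ∈ Finset.range (k+2), μ ^ (k+1) := by
        apply Finset.sum_lt_sum
        · intro i hi
          rw [Finset.mem_range] at hi
          have h1 : a ^ i ≤ μ ^ i := pow_le_pow_left₀ ha hlt.le i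
          have h2 : μ ^ i * μ ^ (k + 2 - 1 - i) = μ ^ (k+1) := by
            rw [← pow_add]; congr 1; omega
          calc a ^ i * μ ^ (k + 2 - 1 - i) ≤ μ ^ i * μ ^ (k + 2 - 1 - i) := by
                apply mul_le_mul_of_nonneg_right h1 (by positivity)
            _ = μ ^ (k+1) := h2
        · refine ⟨1, Finset.mem_range.2 (by omega), ?_⟩
          have h1 : a ^ 1 < μ ^ 1 := by simpa using hlt
          have h2 : μ ^ 1 * μ ^ (k + 2 - 1 - 1) = μ ^ (k+1) := by
            rw [← pow_add]; congr 1; omega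
          calc a ^ 1 * μ ^ (k + 2 - 1 - 1) < μ ^ 1 * μ ^ (k + 2 - 1 - 1) := by
                apply mul_lt_mul_of_pos_right h1 (by positivity)
            _ = μ ^ (k+1) := h2
      rw [Finset.sum_const, Finset.card_range, nsmul_eq_mul] at hsum
      have := mul_lt_mul_of_neg_right hsum (by linarith : a - μ < 0)
      push_cast at this ⊢
      linarith
    · have hsum : (∑ _i ∈ Finset.range (k+2), μ ^ (k+1))
          < ∑ i ∈ Finset.range (k+2), a ^ i * μ ^ (k + 2 - 1 - i) := by
        apply Finset.sum_lt_sum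
        · intro i hi
          rw [Finset.mem_range] at hi
          have h1 : μ ^ i ≤ a ^ i := pow_le_pow_left₀ hμ.le hgt.le i
          have h2 : μ ^ i * μ ^ (k + 2 - 1 - i) = μ ^ (k+1) := by
            rw [← pow_add]; congr 1; omega
          rw [← h2]
          apply mul_le_mul_of_nonneg_right h1 (by positivity)
        · refine ⟨1, Finset.mem_range.2 (by omega), ?_⟩
          have h1 : μ ^ 1 < a ^ 1 := by simpa using hgt
          have h2 : μ ^ 1 * μ ^ (k + 2 - 1 - 1) = μ ^ (k+1) := by
            rw [← pow_add]; congr 1; omega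
          rw [← h2]
          apply mul_lt_mul_of_pos_right h1 (by positivity)
      rw [Finset.sum_const, Finset.card_range, nsmul_eq_mul] at hsum
      have := mul_lt_mul_of_pos_right hsum (by linarith : 0 < a - μ)
      push_cast at this ⊢
      linarith
  have h5 : μ ^ (k+2) + ((k:ℝ)+2) * μ ^ (k+1) * (a - μ) < a ^ (k+2) := by linarith
  have hcast : ((k + 2 : ℕ) : ℝ) = (k : ℝ) + 2 := by push_cast; ring
  have he : k + 2 - 1 = k + 1 := by omega
  rw [he, hcast]
  exact h5

lemma tangent_le (m : ℕ) (hm : 1 ≤ m) {μ a : ℝ} (hμ : 0 < μ) (ha : 0 ≤ a) :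
    μ ^ m + m * μ ^ (m-1) * (a - μ) ≤ a ^ m := by
  rcases eq_or_ne a μ with rfl | hne
  · simp
  rcases eq_or_lt_of_le hm with h1 | h2
  · obtain rfl : m = 1 := h1.symm
    simp
  · exact (tangent_lt m h2 hμ ha hne).le

lemma choose_id1 (n m : ℕ) (hm : 1 ≤ m) :
    ((n:ℝ) + 1) * (n.choose (m-1)) = m * ((n+1).choose m) := by
  obtain ⟨k, rfl⟩ : ∃ k, m = k + 1 := ⟨m - 1, by omega⟩
  have h2 : (n+1) * n.choose k = (n+1).choose (k+1) * (k+1) := Nat.add_one_mul_choose_eq n k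
  have h3 := congrArg (Nat.cast : ℕ → ℝ) h2
  push_cast at h3 ⊢
  simpa using by linarith [h3]

lemma choose_pascal (n m : ℕ) (hm : 1 ≤ m) :
    (((n+1).choose m : ℝ)) = n.choose m + n.choose (m-1) := by
  obtain ⟨k, rfl⟩ : ∃ k, m = k + 1 := ⟨m - 1, by omega⟩
  have h2 := congrArg (Nat.cast : ℕ → ℝ) (Nat.choose_succ_succ n k)
  push_cast at h2 ⊢
  linarith

lemma tangent_id (n m : ℕ) (hm : 1 ≤ m) (μ a : ℝ) :
    (n.choose m : ℝ) * μ ^ m + (((n:ℝ)+1) * a - n * μ) * (n.choose (m-1)) * μ ^ (m-1)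
      = ((n+1).choose m : ℝ) * (μ ^ m + m * μ ^ (m-1) * (a - μ)) := by
  obtain ⟨k, rfl⟩ : ∃ k, m = k + 1 := ⟨m - 1, by omega⟩
  have h1 := choose_id1 n (k+1) (by omega)
  have h2 := choose_pascal n (k+1) (by omega)
  simp only [Nat.add_sub_cancel] at h1 h2 ⊢
  rw [h2]
  push_cast at h1 ⊢
  linear_combination μ ^ k * (a - μ) * h1 + ((k:ℝ) + 1) * μ ^ k * (a - μ) * h2

lemma key : ∀ (n : ℕ) (lam : Fin n → ℝ), (∀ i, 0 < lam i) → ∀ m, 1 ≤ m →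
    esymmFun n lam m ≤ (n.choose m : ℝ) * ((∑ i, lam i) / (n : ℝ)) ^ m ∧
    (2 ≤ m → m ≤ n → esymmFun n lam m = (n.choose m : ℝ) * ((∑ i, lam i) / (n : ℝ)) ^ m →
      ∀ i j, lam i = lam j) := by
  intro n
  induction n with
  | zero =>
    intro lam hpos m hm
    constructor
    · rw [esymm_gt 0 m (by omega)]
      obtain ⟨k, rfl⟩ : ∃ k, m = k + 1 := ⟨m - 1, by omega⟩
      simp
    · intro h2 h3; omega
  | succ n ih =>
    intro lam hpos m hm
    set F : Fin n → ℝ := lam ∘ Fin.castSucc with hF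
    set t : ℝ := lam (Fin.last n) with htdef
    have ht : 0 < t := hpos _
    have hFpos : ∀ i, 0 < F i := fun i => hpos _
    have hsum : ∑ i, lam i = (∑ i, F i) + t := Fin.sum_univ_castSucc lam
    by_cases hmn : m ≤ n + 1
    swap
    · constructor
      · rw [esymm_gt (n+1) m (by omega), Nat.choose_eq_zero_of_lt (by omega)]
        simp
      · intro _ h3; omega
    have hrec : esymmFun (n+1) lam m = esymmFun n F m + t * esymmFun n F (m-1) := by
      rw [esymm_rec n m (by omega) hmn lam, ← hF, ← htdef]
    clear_value F t
    rcases Nat.eq_zero_or_pos n with rfl | hn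
    · -- n = 0 : single variable
      obtain rfl : m = 1 := by omega
      have he : esymmFun 1 lam 1 = t := by
        rw [hrec, show (1:ℕ) - 1 = 0 from rfl, esymm_zero, esymm_gt 0 1 (by omega)]
        ring
      constructor
      · rw [he, hsum]
        have hs0 : ∑ i : Fin 0, F i = 0 := by simp
        rw [hs0]
        norm_num
      · intro h2 _ _; omega
    · -- main case: n ≥ 1
      have hn' : (0:ℝ) < n := by exact_mod_cast hn
      have hS : 0 < ∑ i, F i := by
        have : Nonempty (Fin n) := ⟨⟨0, hn⟩⟩
        exact Finset.sum_pos (fun i _ => hFpos i) Finset.univ_nonempty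
      set μ : ℝ := (∑ i, F i) / (n : ℝ) with hμdef
      have hμ : 0 < μ := div_pos hS hn'
      have hSμ : ∑ i, F i = n * μ := by
        rw [hμdef]; field_simp
      set a : ℝ := ((∑ i, F i) + t) / ((n : ℝ) + 1) with hadef
      have ha : 0 < a := by positivity
      have hta : t = ((n:ℝ)+1) * a - n * μ := by
        rw [hadef, hSμ]; field_simp; ring
      have hsuma : (∑ i, lam i) / ((n:ℝ) + 1) = a := by
        rw [hsum, hadef]
      clear_value μ a
      have h1 : esymmFun n F m ≤ (n.choose m : ℝ) * μ ^ m := by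
        have h := (ih F hFpos m (by omega)).1
        rwa [← hμdef] at h
      have h2 : esymmFun n F (m-1) ≤ (n.choose (m-1) : ℝ) * μ ^ (m-1) := by
        rcases Nat.eq_or_lt_of_le hm with h1' | h1'
        · rw [← h1']
          simp [esymm_zero]
        · have h := (ih F hFpos (m-1) (by omega)).1
          rwa [← hμdef] at h
      have hcnn : (0:ℝ) ≤ ((n+1).choose m : ℝ) := by positivity
      have hid := tangent_id n m (by omega) μ a
      have hstep : (n.choose m : ℝ) * μ^m + t * ((n.choose (m-1)) * μ^(m-1))
          = ((n+1).choose m : ℝ) * (μ ^ m + m * μ ^ (m-1) * (a - μ)) := by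
        rw [hta]
        linear_combination hid
      have htan : (n.choose m : ℝ) * μ^m + t * ((n.choose (m-1)) * μ^(m-1))
          ≤ ((n+1).choose m : ℝ) * a^m := by
        rw [hstep]
        exact mul_le_mul_of_nonneg_left (tangent_le m (by omega) hμ ha.le) hcnn
      have hcast : ((n+1 : ℕ) : ℝ) = ((n:ℕ) : ℝ) + 1 := by push_cast; ring
      have h2' : t * esymmFun n F (m-1) ≤ t * ((n.choose (m-1) : ℝ) * μ ^ (m-1)) :=
        mul_le_mul_of_nonneg_left h2 ht.le
      constructor
      · rw [hrec, hcast, hsuma]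
        linarith
      · intro hm2 hmn' heq
        rw [hcast, hsuma, hrec] at heq
        -- first: t = μ
        have htμ : t = μ := by
          by_contra htμ
          have haμ' : a ≠ μ := by
            intro h
            apply htμ
            rw [h] at hta
            rw [hta]; ring
          have hcpos : (0:ℝ) < ((n+1).choose m : ℝ) := by
            exact_mod_cast Nat.choose_pos hmn'
          have hst := mul_lt_mul_of_pos_left (tangent_lt m hm2 hμ ha.le haμ') hcpos
          rw [← hstep] at hst
          linarith
        -- equality propagates
        have haμ2 : a = μ := by
          have h9 : ((n:ℝ)+1) * a = ((n:ℝ)+1) * μ := by rw [htμ] at hta; linarith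
          exact mul_left_cancel₀ (by positivity) h9
        have hfin : (n.choose m : ℝ) * μ^m + t * ((n.choose (m-1)) * μ^(m-1))
            = ((n+1).choose m : ℝ) * a ^ m := by
          rw [hstep, haμ2]; ring
        have hEm : esymmFun n F m = (n.choose m : ℝ) * μ ^ m := by linarith
        have hEm1 : esymmFun n F (m-1) = (n.choose (m-1) : ℝ) * μ ^ (m-1) := by
          have h9 : t * esymmFun n F (m-1) = t * ((n.choose (m-1) : ℝ) * μ ^ (m-1)) := by
            linarith
          exact mul_left_cancel₀ (ne_of_gt ht) h9
        have hconst : ∀ i j : Fin n, F i = F j := by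
          rcases le_or_gt m n with hmln | hmgn
          · refine (ih F hFpos m (by omega)).2 hm2 hmln ?_
            rw [← hμdef]
            exact hEm
          · rcases le_or_gt 2 n with h2n | h2n
            · refine (ih F hFpos (m-1) (by omega)).2 (by omega) (by omega) ?_
              rw [← hμdef]
              exact hEm1
            · have hn1 : n = 1 := by omega
              subst hn1
              intro i j
              rw [Subsingleton.elim i j]
        have hfc : ∀ i : Fin n, F i = μ := by
          intro i
          have hsc : ∑ j, F j = n * F i := by
            calc ∑ j, F j = ∑ _j : Fin n, F i := Finset.sum_congr rfl (fun j _ => hconst j i)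
              _ = n * F i := by
                  rw [Finset.sum_const, Finset.card_univ, Fintype.card_fin, nsmul_eq_mul]
          have h9 : (n:ℝ) * F i = (n:ℝ) * μ := by rw [← hsc, hSμ]
          exact mul_left_cancel₀ (ne_of_gt hn') h9
        have hall : ∀ i : Fin (n+1), lam i = μ := by
          intro i
          induction i using Fin.lastCases with
          | last => rw [← htdef]; exact htμ
          | cast j =>
            have := hfc j
            rw [hF] at this
            exact this
        intro i j
        rw [hall i, hall j]

/-- If `p(λ) = ∏ (λ - λᵢ)` is a monic degree-`n` polynomial with positive
real roots and mean root `λ̄`, and equality `aₘ = C(n,m) ⬝ λ̄^m` holds for some index `m` with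
`2 ≤ m ≤ n` (where `aₘ = eₘ(λ₁,…,λₙ)`), then all roots are equal to `λ̄`. -/
theorem stmt1 (n : ℕ) (hn : 0 < n) (lam : Fin n → ℝ) (hpos : ∀ i, 0 < lam i)
    (p : Polynomial ℝ) (hp : p = ∏ i, (X - C (lam i)))
    (lbar : ℝ) (hlbar : lbar = (∑ i, lam i) / n)
    (m : ℕ) (hm2 : 2 ≤ m) (hmn : m ≤ n)
    (heq : esymmFun n lam m = (n.choose m : ℝ) * lbar ^ m) :
    ∀ i, lam i = lbar := by
  have heq' : esymmFun n lam m = (n.choose m : ℝ) * ((∑ i, lam i) / (n : ℝ)) ^ m := by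
    rw [heq, hlbar]
  have hall := (key n lam hpos m (by omega)).2 hm2 hmn heq'
  intro i
  have hs : ∑ j, lam j = n * lam i := by
    calc ∑ j, lam j = ∑ _j : Fin n, lam i := Finset.sum_congr rfl (fun j _ => hall j i)
      _ = n * lam i := by
          rw [Finset.sum_const, Finset.card_univ, Fintype.card_fin, nsmul_eq_mul]
  rw [hlbar, hs]
  have hn' : ((n:ℕ):ℝ) ≠ 0 := by exact_mod_cast hn.ne'
  exact (mul_div_cancel_left₀ (lam i) hn').symm
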